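/- Every separable universal metric space M contains a countable dense subset S such that the subspace on S is universal, and every separable homogeneous metric space M contains a countable dense subset S such that the subspace on S is homogeneous. -/

import Mathlib

/-- The set of distances realized in a metric space. -/
def distSet (X : Type*) [MetricSpace X] : Set ℝ :=
  {r : ℝ | ∃ x y : X, dist x y = r}

/-- A metric space is homogeneous if every isometry from a finite subset into the
space extends to a bijective self-isometry. -/
def IsHomogeneous (X : Type*) [MetricSpace X] : Prop :=
  ∀ F : Set X, F.Finite →
    ∀ f : F → X, (∀ x y : F, dist (f x) (f y) = dist (x : X) (y : X)) →
      ∃ g : X ≃ᵢ X, ∀ x : F, g (x : X) = f x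

/-- A metric space is universal if it is homogeneous and embeds isometrically every
finite metric space whose distances lie in its distance set. -/
def IsUniversal (X : Type*) [MetricSpace X] : Prop :=
  IsHomogeneous X ∧
    ∀ (F : Type) [MetricSpace F] [Finite F], distSet F ⊆ distSet X →
      ∃ f : F → X, ∀ a b : F, dist (f a) (f b) = dist a b

/-- An Urysohn metric space: homogeneous, separable, complete, and embedding every
separable metric space whose distances lie in its distance set. -/
def IsUrysohn (X : Type*) [MetricSpace X] : Prop :=
  IsHomogeneous X ∧ TopologicalSpace.SeparableSpace X ∧ CompleteSpace X ∧
    ∀ (N : Type) [MetricSpace N] [TopologicalSpace.SeparableSpace N],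
      distSet N ⊆ distSet X →
        ∃ f : N → X, ∀ a b : N, dist (f a) (f b) = dist a b

/-- The triple `(a, b, c)` of nonnegative reals is metric: `|a - b| ≤ c ≤ a + b`. -/
def MetricTriple (a b c : ℝ) : Prop := |a - b| ≤ c ∧ c ≤ a + b

/-- `x ⤳ (a, b, c, d)`: the triples `(x,a,b)` and `(x,c,d)` are metric and
`a ≥ max {b, c, d}`. -/
def Leads (x a b c d : ℝ) : Prop :=
  MetricTriple x a b ∧ MetricTriple x c d ∧ b ≤ a ∧ c ≤ a ∧ d ≤ a

/-- The 4-values condition. -/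
def FourValues (R : Set ℝ) : Prop :=
  ∀ a b c d, a ∈ R → b ∈ R → c ∈ R → d ∈ R →
    (∃ x ∈ R, Leads x a b c d) → ∃ y ∈ R, Leads y a d c b

/-- `0` is a limit point of `R ⊆ [0, ∞)`. -/
def ZeroLimit (R : Set ℝ) : Prop := ∀ ε > 0, ∃ r ∈ R, 0 < r ∧ r < ε

/-- `d` is a metric on the type `α`. -/
def IsMetricOn {α : Type*} (d : α → α → ℝ) : Prop :=
  (∀ x, d x x = 0) ∧ (∀ x y, d x y = d y x) ∧
    (∀ x y z, d x z ≤ d x y + d y z) ∧ ∀ x y, d x y = 0 → x = y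

/-- A restricted type function of the metric space `X`: a positive real valued function on a
finite subset of `X`, compatible with the metric, with values in the distance set of `X`. -/
def IsRestrictedType (X : Type*) [MetricSpace X] (F : Set X) (t : F → ℝ) : Prop :=
  F.Finite ∧ (∀ x, 0 < t x) ∧
    (∀ x y : F, |t x - t y| ≤ dist (x : X) (y : X) ∧ dist (x : X) (y : X) ≤ t x + t y) ∧
    ∀ x, t x ∈ distSet X

/-- A Katětov function of the metric space `X`: a positive real valued function on a finite
subset of `X` whose one-point extension `Sp(k)` is isometric to a subspace of `X`. -/
def IsKatetov (X : Type*) [MetricSpace X] (F : Set X) (k : F → ℝ) : Prop :=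
  F.Finite ∧ (∀ x, 0 < k x) ∧
    ∃ (g : F → X) (p : X),
      (∀ x y : F, dist (g x) (g y) = dist (x : X) (y : X)) ∧ ∀ x : F, dist p (g x) = k x

/-- `p` realizes the type function `t` in `X`. -/
def Realizes {X : Type*} [MetricSpace X] (F : Set X) (t : F → ℝ) (p : X) : Prop :=
  ∀ x : F, dist p (x : X) = t x

noncomputable section
open Classical

namespace S17

variable {M : Type} [MetricSpace M]

/-- chosen global isometry extending φ on F -/
def gOf (F : Set M) (φ : M → M) : M ≃ᵢ M :=
  if h : ∃ g : M ≃ᵢ M, ∀ x ∈ F, g x = φ x then h.choose else IsometryEquiv.refl M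

theorem gOf_spec {F : Set M} {φ : M → M} (h : ∃ g : M ≃ᵢ M, ∀ x ∈ F, g x = φ x) :
    ∀ x ∈ F, gOf F φ x = φ x := by
  rw [gOf, dif_pos h]; exact h.choose_spec

/-- normalized pairs (finite subset, partial isometry candidate encoded as total fn) -/
def P (j : M) (T : Set M) : Set ((Set M) × (M → M)) :=
  {p | p.1 ⊆ T ∧ p.1.Finite ∧ (∀ x ∈ p.1, p.2 x ∈ T) ∧ ∀ x ∉ p.1, p.2 x = j}

def GSet (j : M) (T : Set M) : Set (M ≃ᵢ M) :=
  (fun p : (Set M) × (M → M) => gOf p.1 p.2) '' P j T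

/-- distances realized within a subset -/
def dS (T : Set M) : Set ℝ := {r : ℝ | ∃ x ∈ T, ∃ y ∈ T, dist x y = r}

/-- chosen embedding of a distance matrix -/
def emb (j : M) (n : ℕ) (d : Fin n → Fin n → ℝ) : Fin n → M :=
  if h : ∃ f : Fin n → M, ∀ i k, dist (f i) (f k) = d i k then h.choose else fun _ => j

def U (j : M) (T : Set M) : Set M :=
  ⋃ n : ℕ, ⋃ d ∈ {d : Fin n → Fin n → ℝ | ∀ i k, d i k ∈ dS T}, Set.range (emb j n d)

def step (j : M) (T : Set M) : Set M :=
  T ∪ (⋃ g ∈ GSet j T, (g '' T ∪ g.symm '' T)) ∪ U j T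

def seq (j : M) (D : Set M) : ℕ → Set M
  | 0 => D
  | n + 1 => step j (seq j D n)

def S (j : M) (D : Set M) : Set M := ⋃ n, seq j D n

/-! ### Countability -/

theorem dS_countable {T : Set M} (hT : T.Countable) : (dS T).Countable := by
  have : dS T = (fun p : M × M => dist p.1 p.2) '' (T ×ˢ T) := by
    ext r
    constructor
    · rintro ⟨x, hx, y, hy, rfl⟩; exact ⟨(x, y), ⟨hx, hy⟩, rfl⟩
    · rintro ⟨⟨x, y⟩, ⟨hx, hy⟩, rfl⟩; exact ⟨x, hx, y, hy, rfl⟩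
  rw [this]
  exact (hT.prod hT).image _

theorem fiber_countable (j : M) {F T : Set M} (hF : F.Finite) (hT : T.Countable) :
    {φ : M → M | (∀ x ∈ F, φ x ∈ T) ∧ ∀ x ∉ F, φ x = j}.Countable := by
  haveI := hF.to_subtype
  haveI := hT.to_subtype
  have hsub : {φ : M → M | (∀ x ∈ F, φ x ∈ T) ∧ ∀ x ∉ F, φ x = j} ⊆
      Set.range (fun ψ : ↥F → ↥T => fun x => if h : x ∈ F then (ψ ⟨x, h⟩ : M) else j) := by
    rintro φ ⟨h1, h2⟩
    refine ⟨fun z => ⟨φ z, h1 z z.2⟩, funext fun x => ?_⟩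
    by_cases h : x ∈ F
    · simp [h]
    · simp [h, h2 x h]
  exact (Set.countable_range _).mono hsub

theorem P_countable (j : M) {T : Set M} (hT : T.Countable) : (P j T).Countable := by
  have hFS : {F : Set M | F.Finite ∧ F ⊆ T}.Countable := Set.countable_setOf_finite_subset hT
  have hsub : P j T ⊆ ⋃ F ∈ {F : Set M | F.Finite ∧ F ⊆ T},
      ({F} : Set (Set M)) ×ˢ {φ : M → M | (∀ x ∈ F, φ x ∈ T) ∧ ∀ x ∉ F, φ x = j} := by
    rintro ⟨F, φ⟩ ⟨h1, h2, h3, h4⟩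
    exact Set.mem_biUnion ⟨h2, h1⟩ ⟨rfl, h3, h4⟩
  refine Set.Countable.mono hsub ?_
  exact hFS.biUnion fun F hF => (Set.countable_singleton F).prod (fiber_countable j hF.1 hT)

theorem GSet_countable (j : M) {T : Set M} (hT : T.Countable) : (GSet j T).Countable :=
  (P_countable j hT).image _

theorem U_countable (j : M) {T : Set M} (hT : T.Countable) : (U j T).Countable := by
  refine Set.countable_iUnion fun n => ?_
  have hd : {d : Fin n → Fin n → ℝ | ∀ i k, d i k ∈ dS T}.Countable := by
    haveI := (dS_countable hT).to_subtype
    have hsub : {d : Fin n → Fin n → ℝ | ∀ i k, d i k ∈ dS T} ⊆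
        Set.range (fun ψ : Fin n → Fin n → ↥(dS T) => fun i k => (ψ i k : ℝ)) := by
      intro d hd
      exact ⟨fun i k => ⟨d i k, hd i k⟩, rfl⟩
    exact (Set.countable_range _).mono hsub
  exact hd.biUnion fun d _ => Set.countable_range _

theorem step_countable (j : M) {T : Set M} (hT : T.Countable) : (step j T).Countable := by
  refine (Set.Countable.union (hT.union ?_) (U_countable j hT))
  exact (GSet_countable j hT).biUnion fun g _ => (hT.image _).union (hT.image _)

theorem seq_countable (j : M) {D : Set M} (hD : D.Countable) : ∀ n, (seq j D n).Countable
  | 0 => hD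
  | n + 1 => step_countable j (seq_countable j hD n)

theorem S_countable (j : M) {D : Set M} (hD : D.Countable) : (S j D).Countable :=
  Set.countable_iUnion (seq_countable j hD)

/-! ### Monotonicity and capture -/

theorem subset_step (j : M) (T : Set M) : T ⊆ step j T :=
  fun _ hx => Or.inl (Or.inl hx)

theorem seq_mono (j : M) (D : Set M) {m n : ℕ} (h : m ≤ n) : seq j D m ⊆ seq j D n := by
  induction n with
  | zero => simp_all
  | succ n ih =>
    rcases Nat.lt_or_ge m (n + 1) with h' | h'
    · exact (ih (Nat.lt_succ_iff.mp h')).trans (subset_step j _)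
    · have : m = n + 1 := le_antisymm h h'
      subst this; exact fun _ hx => hx

theorem seq_subset_S (j : M) (D : Set M) (n : ℕ) : seq j D n ⊆ S j D :=
  Set.subset_iUnion (seq j D) n

theorem finite_capture (j : M) (D : Set M) {F : Set M} (hF : F.Finite) (hFS : F ⊆ S j D) :
    ∃ n, F ⊆ seq j D n := by
  revert hFS
  refine Set.Finite.induction_on (motive := fun F _ => F ⊆ S j D → ∃ n, F ⊆ seq j D n) F hF (fun _ => ⟨0, by simp⟩) ?_
  intro x F hx hFfin ih hFS
  obtain ⟨n1, hn1⟩ := ih (fun y hy => hFS (Set.mem_insert_of_mem x hy))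
  obtain ⟨n2, hn2⟩ := Set.mem_iUnion.mp (hFS (Set.mem_insert x F))
  refine ⟨max n1 n2, Set.insert_subset ?_ ?_⟩
  · exact seq_mono j D (le_max_right n1 n2) hn2
  · exact hn1.trans (seq_mono j D (le_max_left n1 n2))

theorem P_mono (j : M) {T T' : Set M} (h : T ⊆ T') : P j T ⊆ P j T' := by
  rintro ⟨F, φ⟩ ⟨h1, h2, h3, h4⟩
  exact ⟨h1.trans h, h2, fun x hx => h (h3 x hx), h4⟩

theorem dS_mono {T T' : Set M} (h : T ⊆ T') : dS T ⊆ dS T' := by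
  rintro r ⟨x, hx, y, hy, rfl⟩
  exact ⟨x, h hx, y, h hy, rfl⟩

/-! ### Closure under chosen isometries -/

theorem closure_g (j : M) (D : Set M) {n : ℕ} {p : (Set M) × (M → M)}
    (hp : p ∈ P j (seq j D n)) :
    ∀ x ∈ S j D, gOf p.1 p.2 x ∈ S j D ∧ (gOf p.1 p.2).symm x ∈ S j D := by
  intro x hx
  obtain ⟨m, hm⟩ := Set.mem_iUnion.mp hx
  set k := max n m with hk
  have hpk : p ∈ P j (seq j D k) := P_mono j (seq_mono j D (le_max_left n m)) hp
  have hxk : x ∈ seq j D k := seq_mono j D (le_max_right n m) hm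
  have hg : gOf p.1 p.2 ∈ GSet j (seq j D k) := ⟨p, hpk, rfl⟩
  constructor
  · refine seq_subset_S j D (k + 1) ?_
    exact Or.inl (Or.inr (Set.mem_biUnion hg (Or.inl ⟨x, hxk, rfl⟩)))
  · refine seq_subset_S j D (k + 1) ?_
    exact Or.inl (Or.inr (Set.mem_biUnion hg (Or.inr ⟨x, hxk, rfl⟩)))

/-- restrict a global isometry preserving S to the subtype -/
def restrict (g : M ≃ᵢ M) (T : Set M) (h1 : ∀ x ∈ T, g x ∈ T)
    (h2 : ∀ x ∈ T, g.symm x ∈ T) : ↥T ≃ᵢ ↥T where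
  toFun x := ⟨g x, h1 x x.2⟩
  invFun x := ⟨g.symm x, h2 x x.2⟩
  left_inv x := Subtype.ext (g.symm_apply_apply x)
  right_inv x := Subtype.ext (g.apply_symm_apply x)
  isometry_toFun := Isometry.of_dist_eq fun a b => by
    simp only [Subtype.dist_eq]
    exact g.isometry.dist_eq a b

theorem distSet_subtype_sub (T : Set M) : distSet ↥T ⊆ distSet M := by
  rintro r ⟨x, y, rfl⟩
  exact ⟨(x : M), (y : M), (Subtype.dist_eq x y).symm⟩

theorem mem_dS_of_mem_distSet {T : Set M} {r : ℝ} (h : r ∈ distSet ↥T) : r ∈ dS T := by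
  obtain ⟨x, y, rfl⟩ := h
  exact ⟨(x : M), x.2, (y : M), y.2, (Subtype.dist_eq x y).symm⟩

/-! ### Homogeneity of S -/

theorem S_homog (j : M) (D : Set M) (hHom : IsHomogeneous M) : IsHomogeneous ↥(S j D) := by
  intro F hF f hf
  have hF'fin : (Subtype.val '' F).Finite := hF.image _
  have hF'T : Subtype.val '' F ⊆ S j D := by rintro x ⟨w, _, rfl⟩; exact w.2
  have memF : ∀ {x : M} (h : x ∈ Subtype.val '' F), (⟨x, hF'T h⟩ : ↥(S j D)) ∈ F := by
    rintro x ⟨w, hw, rfl⟩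
    exact Set.mem_of_eq_of_mem (Subtype.ext rfl) hw
  set φ : M → M := fun x =>
      if h : x ∈ Subtype.val '' F then ((f ⟨⟨x, hF'T h⟩, memF h⟩ : ↥(S j D)) : M) else j
    with hφ
  have hφpos : ∀ {x : M} (h : x ∈ Subtype.val '' F),
      φ x = ((f ⟨⟨x, hF'T h⟩, memF h⟩ : ↥(S j D)) : M) := fun h => dif_pos h
  -- capture F' and the range of f in some seq n
  haveI := hF.to_subtype
  have hrng : (Set.range fun w : F => ((f w : ↥(S j D)) : M)).Finite := Set.finite_range _
  obtain ⟨n, hn⟩ := finite_capture j D (hF'fin.union hrng)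
    (Set.union_subset hF'T (by rintro x ⟨w, rfl⟩; exact (f w).2))
  have hp : (Subtype.val '' F, φ) ∈ P j (seq j D n) := by
    refine ⟨fun x hx => hn (Or.inl hx), hF'fin, ?_, ?_⟩
    · intro x hx
      show φ x ∈ seq j D n
      rw [hφpos hx]
      exact hn (Or.inr ⟨_, rfl⟩)
    · intro x hx
      exact dif_neg hx
  have hiso : ∀ x y : ↥(Subtype.val '' F),
      dist (φ (x : M)) (φ (y : M)) = dist (x : M) (y : M) := by
    rintro ⟨x, hx⟩ ⟨y, hy⟩
    rw [hφpos hx, hφpos hy,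
      ← Subtype.dist_eq (f ⟨⟨x, hF'T hx⟩, memF hx⟩) (f ⟨⟨y, hF'T hy⟩, memF hy⟩),
      hf ⟨⟨x, hF'T hx⟩, memF hx⟩ ⟨⟨y, hF'T hy⟩, memF hy⟩, Subtype.dist_eq]
  have hex : ∃ g : M ≃ᵢ M, ∀ x ∈ Subtype.val '' F, g x = φ x := by
    obtain ⟨g, hg⟩ := hHom (Subtype.val '' F) hF'fin (fun x => φ (x : M)) hiso
    exact ⟨g, fun x hx => hg ⟨x, hx⟩⟩
  have hcl := closure_g j D hp
  have gspec := gOf_spec hex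
  refine ⟨restrict (gOf (Subtype.val '' F) φ) (S j D)
    (fun x hx => (hcl x hx).1) (fun x hx => (hcl x hx).2), ?_⟩
  intro x
  have hmem : ((x : ↥(S j D)) : M) ∈ Subtype.val '' F := ⟨(x : ↥(S j D)), x.2, rfl⟩
  apply Subtype.ext
  show gOf (Subtype.val '' F) φ ((x : ↥(S j D)) : M) = ((f x : ↥(S j D)) : M)
  rw [gspec _ hmem, hφpos hmem]

/-! ### Universality of S -/

theorem emb_spec {j : M} {n : ℕ} {d : Fin n → Fin n → ℝ}
    (h : ∃ f : Fin n → M, ∀ i k, dist (f i) (f k) = d i k) :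
    ∀ i k, dist (emb j n d i) (emb j n d k) = d i k := by
  rw [emb, dif_pos h]; exact h.choose_spec

theorem S_univ_emb (j : M) (D : Set M) (hU : IsUniversal M) (F : Type) [MetricSpace F]
    [Finite F] (hsub : distSet F ⊆ distSet ↥(S j D)) :
    ∃ f : F → ↥(S j D), ∀ a b : F, dist (f a) (f b) = dist a b := by
  set T := S j D with hT
  haveI := Fintype.ofFinite F
  set n := Fintype.card F with hn
  set e := Fintype.equivFin F with he
  set d : Fin n → Fin n → ℝ := fun i k => dist (e.symm i) (e.symm k) with hd
  have hch : ∀ i k : Fin n, ∃ x ∈ T, ∃ y ∈ T, dist x y = d i k := fun i k =>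
    mem_dS_of_mem_distSet (hsub ⟨e.symm i, e.symm k, rfl⟩)
  choose X hX Y hY hXY using hch
  have hWfin : ((Set.range fun p : Fin n × Fin n => X p.1 p.2) ∪
      (Set.range fun p : Fin n × Fin n => Y p.1 p.2)).Finite :=
    (Set.finite_range _).union (Set.finite_range _)
  obtain ⟨N, hN⟩ := finite_capture j D hWfin (by
    rintro x (⟨p, rfl⟩ | ⟨p, rfl⟩)
    · exact hX p.1 p.2
    · exact hY p.1 p.2)
  have hdN : ∀ i k, d i k ∈ dS (seq j D N) := fun i k =>
    ⟨X i k, hN (Or.inl ⟨(i, k), rfl⟩), Y i k, hN (Or.inr ⟨(i, k), rfl⟩), hXY i k⟩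
  have hex : ∃ f : Fin n → M, ∀ i k, dist (f i) (f k) = d i k := by
    obtain ⟨f0, hf0⟩ := hU.2 F (hsub.trans (distSet_subtype_sub T))
    exact ⟨fun i => f0 (e.symm i), fun i k => hf0 _ _⟩
  have hmem : ∀ i, emb j n d i ∈ T := by
    intro i
    refine seq_subset_S j D (N + 1) (Or.inr ?_)
    exact Set.mem_iUnion.mpr ⟨n, Set.mem_biUnion hdN ⟨i, rfl⟩⟩
  refine ⟨fun a => ⟨emb j n d (e a), hmem _⟩, ?_⟩
  intro a b
  rw [Subtype.dist_eq]
  show dist (emb j n d (e a)) (emb j n d (e b)) = dist a b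
  rw [emb_spec hex]
  simp [hd]

end S17
end

/-- Every separable universal metric space contains a countable dense universal
subspace, and every separable homogeneous metric space contains a countable dense homogeneous
subspace. -/
theorem statement17 (M : Type) [MetricSpace M] [TopologicalSpace.SeparableSpace M] :
    (IsUniversal M → ∃ S : Set M, S.Countable ∧ Dense S ∧ IsUniversal S) ∧
    (IsHomogeneous M → ∃ S : Set M, S.Countable ∧ Dense S ∧ IsHomogeneous S) := by
  by_cases hM : Nonempty M
  · obtain ⟨j⟩ := hM
    obtain ⟨D, hDc, hDd⟩ := TopologicalSpace.exists_countable_dense M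
    have hdense : Dense (S17.S j D) := hDd.mono (S17.seq_subset_S j D 0)
    constructor
    · intro hU
      exact ⟨S17.S j D, S17.S_countable j hDc, hdense,
        S17.S_homog j D hU.1, fun F _ _ h => S17.S_univ_emb j D hU F h⟩
    · intro hH
      exact ⟨S17.S j D, S17.S_countable j hDc, hdense, S17.S_homog j D hH⟩
  · haveI : IsEmpty M := not_nonempty_iff.mp hM
    have hhom : IsHomogeneous ↥(∅ : Set M) := by
      intro F hF f hf
      exact ⟨IsometryEquiv.refl _, fun x => absurd ((x : ↥(∅ : Set M)).2) (Set.notMem_empty _)⟩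
    have hdense : Dense (∅ : Set M) := fun x => isEmptyElim x
    have hcnt : (∅ : Set M).Countable := Set.countable_empty
    constructor
    · intro _
      refine ⟨∅, hcnt, hdense, hhom, ?_⟩
      intro F _ _ hsub
      haveI : IsEmpty F := by
        by_contra h
        rw [not_isEmpty_iff] at h
        obtain ⟨a⟩ := h
        obtain ⟨x, -⟩ := hsub ⟨a, a, rfl⟩
        exact absurd x.2 (Set.notMem_empty _)
      exact ⟨fun a => isEmptyElim a, fun a => isEmptyElim a⟩
    · intro _
      exact ⟨∅, hcnt, hdense, hhom⟩
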